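/- A subset S of a real projective space is a saturated multi-convex set if and only if S is the intersection of a nonempty family of irreducible convex sets, i.e., S is the intersection of the complements of all projective hyperplanes disjoint from S (and at least one such hyperplane exists). -/

import Mathlib

open scoped LinearAlgebra.Projectivization
open Projectivization

/-- The "positive" projective segment joining the points represented by `u` and `v`:
`{π(a•u + b•v) : a*b ≥ 0, (a,b) ≠ (0,0)}`. -/
def projSeg {W : Type*} [AddCommGroup W] [Module ℝ W] (u v : W) : Set (ℙ ℝ W) :=
  {x | ∃ (a b : ℝ) (h : a • u + b • v ≠ 0),
    0 ≤ a * b ∧ x = Projectivization.mk ℝ (a • u + b • v) h}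

/-- The "negative" projective segment joining the points represented by `u` and `v`:
`{π(a•u + b•v) : a*b ≤ 0, (a,b) ≠ (0,0)}`. -/
def projSegN {W : Type*} [AddCommGroup W] [Module ℝ W] (u v : W) : Set (ℙ ℝ W) :=
  {x | ∃ (a b : ℝ) (h : a • u + b • v ≠ 0),
    a * b ≤ 0 ∧ x = Projectivization.mk ℝ (a • u + b • v) h}

/-- A set in a real projective space is projective convex if for any two distinct points of it,
exactly one of the two projective segments joining them is contained in it. -/
def IsProjConvex {W : Type*} [AddCommGroup W] [Module ℝ W] (S : Set (ℙ ℝ W)) : Prop :=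
  ∀ p ∈ S, ∀ q ∈ S, p ≠ q →
    Xor' (projSeg p.rep q.rep ⊆ S) (projSegN p.rep q.rep ⊆ S)

/-- The quotient topology on a real projective space. -/
noncomputable instance projTopInst {W : Type*} [NormedAddCommGroup W] [NormedSpace ℝ W] :
    TopologicalSpace (ℙ ℝ W) :=
  instTopologicalSpaceQuotient

/-- A saturated multi-convex set: an intersection of a nonempty family of open projective
convex sets. -/
def IsSatMultiConvex {W : Type*} [NormedAddCommGroup W] [NormedSpace ℝ W]
    (C : Set (ℙ ℝ W)) : Prop :=
  ∃ F : Set (Set (ℙ ℝ W)), F.Nonempty ∧ (∀ S ∈ F, IsOpen S ∧ IsProjConvex S) ∧ C = ⋂₀ F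

namespace PS
open Set

variable {V : Type*} [NormedAddCommGroup V] [NormedSpace ℝ V]

/-- The set of nonzero vectors whose class lies in `C`. -/
def U (C : Set (ℙ ℝ V)) : Set V := {v | ∃ h : v ≠ 0, Projectivization.mk ℝ v h ∈ C}

lemma mem_U {C : Set (ℙ ℝ V)} {v : V} (h : v ≠ 0) :
    v ∈ U C ↔ Projectivization.mk ℝ v h ∈ C :=
  ⟨fun ⟨_, hm⟩ => hm, fun hm => ⟨h, hm⟩⟩

lemma ne_zero_of_mem_U {C : Set (ℙ ℝ V)} {v : V} (h : v ∈ U C) : v ≠ 0 := h.1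

lemma smul_mem_U {C : Set (ℙ ℝ V)} {c : ℝ} (hc : c ≠ 0) {v : V} (h : v ∈ U C) :
    c • v ∈ U C := by
  obtain ⟨hv, hm⟩ := h
  refine ⟨smul_ne_zero hc hv, ?_⟩
  rwa [show Projectivization.mk ℝ (c • v) (smul_ne_zero hc hv) = Projectivization.mk ℝ v hv from
    by rw [mk_eq_mk_iff']; exact ⟨c, rfl⟩]

lemma smul_mem_U_iff {C : Set (ℙ ℝ V)} {c : ℝ} (hc : c ≠ 0) {v : V} :
    c • v ∈ U C ↔ v ∈ U C := by
  refine ⟨fun h => ?_, smul_mem_U hc⟩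
  have := smul_mem_U (inv_ne_zero hc) h
  rwa [smul_smul, inv_mul_cancel₀ hc, one_smul] at this

lemma neg_mem_U_iff {C : Set (ℙ ℝ V)} {v : V} : -v ∈ U C ↔ v ∈ U C := by
  have := smul_mem_U_iff (C := C) (v := v) (c := -1) (by norm_num)
  simpa using this

/-- both-coefficients-nonnegative version of "the segment from `u` to `w` is inside `C`". -/
def P (C : Set (ℙ ℝ V)) (u w : V) : Prop :=
  ∀ a b : ℝ, 0 ≤ a → 0 ≤ b → a • u + b • w ≠ 0 → a • u + b • w ∈ U C

lemma P.left_mem {C : Set (ℙ ℝ V)} {u w : V} (hu : u ≠ 0) (h : P C u w) : u ∈ U C := by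
  have := h 1 0 zero_le_one le_rfl (by simpa using hu)
  simpa using this

lemma P.right_mem {C : Set (ℙ ℝ V)} {u w : V} (hw : w ≠ 0) (h : P C u w) : w ∈ U C := by
  have := h 0 1 le_rfl zero_le_one (by simpa using hw)
  simpa using this

lemma P.smul_right {C : Set (ℙ ℝ V)} {u w : V} {c : ℝ} (hc : 0 < c) (h : P C u w) :
    P C u (c • w) := by
  intro a b ha hb hne
  have e : a • u + b • (c • w) = a • u + (b * c) • w := by module
  rw [e] at hne ⊢
  exact h a (b * c) ha (by positivity) hne

lemma P.smul_right_iff {C : Set (ℙ ℝ V)} {u w : V} {c : ℝ} (hc : 0 < c) :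
    P C u (c • w) ↔ P C u w := by
  refine ⟨fun h => ?_, fun h => h.smul_right hc⟩
  have := h.smul_right (c := c⁻¹) (by positivity)
  rwa [smul_smul, inv_mul_cancel₀ hc.ne', one_smul] at this

lemma P.smul_left {C : Set (ℙ ℝ V)} {u w : V} {c : ℝ} (hc : 0 < c) (h : P C u w) :
    P C (c • u) w := by
  intro a b ha hb hne
  have e : a • (c • u) + b • w = (a * c) • u + b • w := by module
  rw [e] at hne ⊢
  exact h (a * c) b (by positivity) hb hne

lemma P.neg_neg {C : Set (ℙ ℝ V)} {u w : V} (h : P C u w) : P C (-u) (-w) := by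
  intro a b ha hb hne
  have e : a • (-u) + b • (-w) = (-1 : ℝ) • (a • u + b • w) := by module
  rw [e] at hne ⊢
  refine smul_mem_U (by norm_num) (h a b ha hb ?_)
  intro h0; rw [h0, smul_zero] at hne; exact hne rfl

lemma P.comm {C : Set (ℙ ℝ V)} {u w : V} (h : P C u w) : P C w u := by
  intro a b ha hb hne
  rw [add_comm] at hne ⊢
  exact h b a hb ha hne

lemma projSeg_subset_iff {C : Set (ℙ ℝ V)} {u w : V} :
    projSeg u w ⊆ C ↔ P C u w := by
  constructor
  · intro hsub a b ha hb hne
    exact ⟨hne, hsub ⟨a, b, hne, mul_nonneg ha hb, rfl⟩⟩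
  · intro hP x hx
    obtain ⟨a, b, h, hab, rfl⟩ := hx
    rcases mul_nonneg_iff.1 hab with ⟨ha, hb⟩ | ⟨ha, hb⟩
    · exact ((mem_U h).1 (hP a b ha hb h))
    · have e : (-a) • u + (-b) • w = (-1 : ℝ) • (a • u + b • w) := by module
      have hne' : (-a) • u + (-b) • w ≠ 0 := by
        rw [e]; exact smul_ne_zero (by norm_num) h
      have := hP (-a) (-b) (by linarith) (by linarith) hne'
      rw [e, smul_mem_U_iff (by norm_num)] at this
      exact (mem_U h).1 this

lemma projSegN_eq {u w : V} : projSegN u w = projSeg u (-w) := by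
  ext x
  simp only [projSeg, projSegN, Set.mem_setOf_eq]
  constructor
  · rintro ⟨a, b, h, hab, rfl⟩
    have e : a • u + (-b) • (-w) = a • u + b • w := by module
    refine ⟨a, -b, by rw [e]; exact h, by nlinarith, ?_⟩
    rw [mk_eq_mk_iff']
    exact ⟨1, by rw [e, one_smul]⟩
  · rintro ⟨a, b, h, hab, rfl⟩
    have e : a • u + (-b) • w = a • u + b • (-w) := by module
    refine ⟨a, -b, by rw [e]; exact h, by nlinarith, ?_⟩
    rw [mk_eq_mk_iff']
    exact ⟨1, by rw [e, one_smul]⟩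

lemma projSegN_subset_iff {C : Set (ℙ ℝ V)} {u w : V} :
    projSegN u w ⊆ C ↔ P C u (-w) := by
  rw [projSegN_eq, projSeg_subset_iff]



lemma P_smul_left_iff {C : Set (ℙ ℝ V)} {u w : V} {c : ℝ} (hc : 0 < c) :
    P C (c • u) w ↔ P C u w := by
  refine ⟨fun h => ?_, fun h => h.smul_left hc⟩
  have := h.smul_left (c := c⁻¹) (by positivity)
  rwa [smul_smul, inv_mul_cancel₀ hc.ne', one_smul] at this

lemma P_neg_left_iff {C : Set (ℙ ℝ V)} {u w : V} : P C (-u) w ↔ P C u (-w) := by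
  constructor
  · intro h; have := h.neg_neg; rwa [neg_neg] at this
  · intro h; have := h.neg_neg; rwa [neg_neg] at this

lemma xor_transfer {C : Set (ℙ ℝ V)} {u w : V} {c d : ℝ} (hc : c ≠ 0) (hd : d ≠ 0)
    (h : Xor' (P C (c • u) (d • w)) (P C (c • u) (-(d • w)))) :
    Xor' (P C u w) (P C u (-w)) := by
  rcases hc.lt_or_gt with h1 | h1
  · rw [show c • u = (-c) • (-u) from by module] at h
    rw [P_smul_left_iff (by linarith), P_smul_left_iff (by linarith),
      P_neg_left_iff, P_neg_left_iff, neg_neg] at h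
    rcases hd.lt_or_gt with h2 | h2
    · rw [show -(d • w) = (-d) • w from by module,
        show d • w = (-d) • (-w) from by module] at h
      rw [P.smul_right_iff (by linarith), P.smul_right_iff (by linarith)] at h
      exact h
    · rw [show -(d • w) = d • (-w) from by module] at h
      rw [P.smul_right_iff h2, P.smul_right_iff h2] at h
      exact (_root_.xor_comm _ _).mp h
  · rw [P_smul_left_iff h1, P_smul_left_iff h1] at h
    rcases hd.lt_or_gt with h2 | h2
    · rw [show -(d • w) = (-d) • w from by module,
        show d • w = (-d) • (-w) from by module] at h
      rw [P.smul_right_iff (by linarith), P.smul_right_iff (by linarith)] at h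
      exact (_root_.xor_comm _ _).mp h
    · rw [show -(d • w) = d • (-w) from by module] at h
      rw [P.smul_right_iff h2, P.smul_right_iff h2] at h
      exact h

lemma mk_ne_mk {u w : V} (hu : u ≠ 0) (hw : w ≠ 0) (h : ∀ c : ℝ, w ≠ c • u) :
    Projectivization.mk ℝ u hu ≠ Projectivization.mk ℝ w hw := by
  intro he
  rw [mk_eq_mk_iff'] at he
  obtain ⟨a, ha⟩ := he
  have ha0 : a ≠ 0 := by rintro rfl; rw [zero_smul] at ha; exact hu ha.symm
  exact h a⁻¹ (by rw [← ha, smul_smul, inv_mul_cancel₀ ha0, one_smul])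

lemma xor_P {C : Set (ℙ ℝ V)} (hconv : IsProjConvex C) {u w : V} (hu : u ≠ 0) (hw : w ≠ 0)
    (huC : Projectivization.mk ℝ u hu ∈ C) (hwC : Projectivization.mk ℝ w hw ∈ C)
    (hne : Projectivization.mk ℝ u hu ≠ Projectivization.mk ℝ w hw) :
    Xor' (P C u w) (P C u (-w)) := by
  obtain ⟨c, hc⟩ := exists_smul_eq_mk_rep ℝ u hu
  obtain ⟨d, hd⟩ := exists_smul_eq_mk_rep ℝ w hw
  have h := hconv _ huC _ hwC hne
  rw [projSeg_subset_iff, projSegN_subset_iff] at h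
  rw [← hc, ← hd, Units.smul_def, Units.smul_def] at h
  exact xor_transfer (Units.ne_zero c) (Units.ne_zero d) h


lemma isOpen_U {C : Set (ℙ ℝ V)} (hC : IsOpen C) : IsOpen (U C) := by
  have h1 : IsOpen {v : {v : V // v ≠ 0} | Projectivization.mk ℝ v.1 v.2 ∈ C} :=
    (continuous_quot_mk).isOpen_preimage _ hC
  have h2 : IsOpen {v : V | v ≠ 0} := isOpen_compl_singleton
  have h3 := h2.isOpenMap_subtype_val _ h1
  convert h3 using 1
  ext v
  simp only [U, Set.mem_setOf_eq, Set.mem_image]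
  constructor
  · rintro ⟨h, hm⟩; exact ⟨⟨v, h⟩, hm, rfl⟩
  · rintro ⟨⟨w, hw⟩, hm, rfl⟩; exact ⟨hw, hm⟩

def Q (C : Set (ℙ ℝ V)) (u m : V) : Prop :=
  ∀ t : ℝ, t ∈ Set.Icc (0:ℝ) 1 → ((1 - t) • u + t • m) ∈ U C

lemma isOpen_setOf_Q {C : Set (ℙ ℝ V)} (hC : IsOpen C) (u : V) :
    IsOpen {m : V | Q C u m} := by
  rw [isOpen_iff_forall_mem_open]
  intro m₀ hm₀
  have hU := isOpen_U hC
  have hFc : Continuous (fun p : ℝ × V => (1 - p.1) • u + p.1 • p.2) := by fun_prop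
  have hG : IsOpen ((fun p : ℝ × V => (1 - p.1) • u + p.1 • p.2) ⁻¹' (U C)) :=
    hFc.isOpen_preimage _ hU
  have hsub : (Set.Icc (0:ℝ) 1) ×ˢ ({m₀} : Set V) ⊆
      (fun p : ℝ × V => (1 - p.1) • u + p.1 • p.2) ⁻¹' (U C) := by
    rintro ⟨t, m⟩ ⟨ht, hm⟩
    rcases hm with rfl
    exact hm₀ t ht
  obtain ⟨O₁, O₂, _, hO₂, hIcc, hm₀2, hsub2⟩ :=
    generalized_tube_lemma isCompact_Icc isCompact_singleton hG hsub
  exact ⟨O₂, fun m hm t ht => hsub2 (Set.mk_mem_prod (hIcc ht) hm), hO₂, hm₀2 rfl⟩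

lemma Q.toP {C : Set (ℙ ℝ V)} {u m : V} (h : Q C u m) : P C u m := by
  intro a b ha hb hne
  have hab0 : a + b ≠ 0 := by
    intro h0
    have ha0 : a = 0 := by linarith
    have hb0 : b = 0 := by linarith
    exact hne (by simp [ha0, hb0])
  have hab : 0 < a + b := lt_of_le_of_ne (add_nonneg ha hb) (Ne.symm hab0)
  have ht : b / (a + b) ∈ Set.Icc (0:ℝ) 1 :=
    ⟨div_nonneg hb hab.le, (div_le_one hab).2 (by linarith)⟩
  have e : (a + b) • ((1 - b / (a + b)) • u + (b / (a + b)) • m) = a • u + b • m := by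
    have h1 : (a + b) * (1 - b / (a + b)) = a := by field_simp; ring
    have h2 : (a + b) * (b / (a + b)) = b := by field_simp
    rw [smul_add, smul_smul, smul_smul, h1, h2]
  have := smul_mem_U hab0 (h _ ht)
  rwa [e] at this

lemma P.toQ {C : Set (ℙ ℝ V)} {u m : V}
    (hnv : ∀ t ∈ Set.Icc (0:ℝ) 1, (1 - t) • u + t • m ≠ 0) (h : P C u m) : Q C u m :=
  fun t ht => h (1 - t) t (by linarith [ht.2]) ht.1 (hnv t ht)

lemma combo_ne {u x : V} (hu : u ≠ 0) (hx : ∀ c : ℝ, x ≠ c • u) :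
    ∀ s : ℝ, (1 - s) • u + s • x ≠ 0 := by
  intro s h0
  rcases eq_or_ne s 0 with rfl | hs0
  · simp only [sub_zero, one_smul, zero_smul, add_zero] at h0
    exact hu h0
  · apply hx (s⁻¹ * (s - 1))
    have h1 : s • x = (s - 1) • u := by linear_combination (norm := module) h0
    calc x = s⁻¹ • (s • x) := by rw [smul_smul, inv_mul_cancel₀ hs0, one_smul]
    _ = s⁻¹ • ((s - 1) • u) := by rw [h1]
    _ = (s⁻¹ * (s - 1)) • u := by rw [smul_smul]

lemma connect {C : Set (ℙ ℝ V)} (hC : IsOpen C) (hconv : IsProjConvex C) {u : V} (hu : u ≠ 0)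
    (huC : u ∈ U C) (m : ℝ → V) (hm : Continuous m)
    (hprop : ∀ t ∈ Set.Icc (0:ℝ) 1, ∀ c : ℝ, m t ≠ c • u)
    (hmem : ∀ t ∈ Set.Icc (0:ℝ) 1, m t ∈ U C)
    (h0 : P C u (m 0)) : ∀ t ∈ Set.Icc (0:ℝ) 1, P C u (m t) := by
  have hm0 : ∀ t ∈ Set.Icc (0:ℝ) 1, m t ≠ 0 := fun t ht => ne_zero_of_mem_U (hmem t ht)
  have hpropneg : ∀ t ∈ Set.Icc (0:ℝ) 1, ∀ c : ℝ, -(m t) ≠ c • u := by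
    intro t ht c h
    exact hprop t ht (-c) (by rw [← neg_neg (m t), h, neg_smul])
  have hxor : ∀ t ∈ Set.Icc (0:ℝ) 1, Xor' (P C u (m t)) (P C u (-(m t))) := by
    intro t ht
    have hmt0 := hm0 t ht
    exact xor_P hconv hu hmt0 ((mem_U hu).1 huC) ((mem_U hmt0).1 (hmem t ht))
      (mk_ne_mk hu hmt0 (hprop t ht))
  have hQ1 : IsOpen {τ : ℝ | Q C u (m τ)} := (isOpen_setOf_Q hC u).preimage hm
  have hQ2 : IsOpen {τ : ℝ | Q C u (-(m τ))} := by
    have : Continuous (fun τ => -(m τ)) := hm.neg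
    exact (isOpen_setOf_Q hC u).preimage this
  intro t ht
  by_contra hP1
  have hP2 : P C u (-(m t)) := by
    rcases hxor t ht with ⟨h, _⟩ | ⟨h, _⟩
    · exact absurd h hP1
    · exact h
  have h01 : (0:ℝ) ∈ Set.Icc (0:ℝ) 1 := ⟨le_rfl, zero_le_one⟩
  have hA : (0:ℝ) ∈ Set.Icc (0:ℝ) 1 ∩ {τ | Q C u (m τ)} :=
    ⟨h01, h0.toQ (fun s _ => combo_ne hu (hprop 0 h01) s)⟩
  have hB : t ∈ Set.Icc (0:ℝ) 1 ∩ {τ | Q C u (-(m τ))} :=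
    ⟨ht, hP2.toQ (fun s _ => combo_ne hu (hpropneg t ht) s)⟩
  have hcover : Set.Icc (0:ℝ) 1 ⊆ {τ | Q C u (m τ)} ∪ {τ | Q C u (-(m τ))} := by
    intro τ hτ
    rcases hxor τ hτ with ⟨h, _⟩ | ⟨h, _⟩
    · exact Or.inl (h.toQ (fun s _ => combo_ne hu (hprop τ hτ) s))
    · exact Or.inr (h.toQ (fun s _ => combo_ne hu (hpropneg τ hτ) s))
  obtain ⟨τ, hτI, hτ1, hτ2⟩ :=
    isPreconnected_Icc _ _ hQ1 hQ2 hcover ⟨0, hA⟩ ⟨t, hB⟩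
  rcases hxor τ hτI with ⟨_, hn⟩ | ⟨_, hn⟩
  · exact hn (Q.toP hτ2)
  · exact hn (Q.toP hτ1)

lemma cover_ineq (s t x y : ℝ) :
    x * y ≤ 0 ∨ 0 ≤ y * (t * x - s * y) ∨ 0 ≤ x * (s * y - t * x) := by
  by_contra h
  push_neg at h
  obtain ⟨h1, h2, h3⟩ := h
  nlinarith [mul_pos_of_neg_of_neg h2 h3, mul_nonneg (le_of_lt h1) (sq_nonneg (t*x - s*y))]

lemma coords_eq {m₁ m₂ : V} (hm₁0 : m₁ ≠ 0) (h12 : ∀ c : ℝ, m₂ ≠ c • m₁)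
    {a b a' b' : ℝ} (h : a • m₁ + b • m₂ = a' • m₁ + b' • m₂) : a = a' ∧ b = b' := by
  have hb : b = b' := by
    by_contra hne
    apply h12 ((a - a') / (b' - b))
    have h1 : (b' - b) • m₂ = (a - a') • m₁ := by linear_combination (norm := module) -h
    have hbb : b' - b ≠ 0 := sub_ne_zero.2 (Ne.symm hne)
    calc m₂ = (b' - b)⁻¹ • ((b' - b) • m₂) := by rw [smul_smul, inv_mul_cancel₀ hbb, one_smul]
    _ = (b' - b)⁻¹ • ((a - a') • m₁) := by rw [h1]
    _ = ((a - a') / (b' - b)) • m₁ := by rw [smul_smul]; congr 1; ring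
  refine ⟨?_, hb⟩
  subst hb
  have h2 : (a - a') • m₁ = 0 := by linear_combination (norm := module) h
  rcases smul_eq_zero.1 h2 with h3 | h3
  · linarith [sub_eq_zero.1 (by linarith [h3] : a - a' = 0)]
  · exact absurd h3 hm₁0

lemma coplanar_flip {C : Set (ℙ ℝ V)} (hconv : IsProjConvex C) {u m₁ m₂ : V} (hu : u ≠ 0)
    (h12 : ∀ c : ℝ, m₂ ≠ c • m₁) (hm₁0 : m₁ ≠ 0) (hm₂0 : m₂ ≠ 0)
    (hm₁U : m₁ ∈ U C) (hm₂U : m₂ ∈ U C)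
    {s t : ℝ} (hs : s ≠ 0) (ht : t ≠ 0) (hsu : s • m₁ + t • m₂ = u)
    (hP₁ : P C u m₁) (hP₂ : P C u m₂) : P C m₁ m₂ := by
  have hxor : Xor' (P C m₁ m₂) (P C m₁ (-m₂)) :=
    xor_P hconv hm₁0 hm₂0 ((mem_U hm₁0).1 hm₁U) ((mem_U hm₂0).1 hm₂U)
      (mk_ne_mk hm₁0 hm₂0 h12)
  rcases hxor with ⟨h, _⟩ | ⟨hPn, hnA⟩
  · exact h
  · exfalso
    have claim : ∀ x y : ℝ, x • m₁ + y • m₂ ≠ 0 → x • m₁ + y • m₂ ∈ U C := by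
      intro x y hz
      rcases cover_ineq s t x y with hc | hc | hc
      · rcases mul_nonneg_iff.1 (by nlinarith : 0 ≤ x * (-y)) with ⟨h1, h2⟩ | ⟨h1, h2⟩
        · have e : x • m₁ + (-y) • (-m₂) = x • m₁ + y • m₂ := by module
          have := hPn x (-y) h1 h2 (by rw [e]; exact hz)
          rwa [e] at this
        · have e : (-x) • m₁ + y • (-m₂) = -(x • m₁ + y • m₂) := by module
          have := hPn (-x) y (by linarith) (by linarith) (by rw [e]; exact neg_ne_zero.2 hz)
          rw [e] at this
          exact neg_mem_U_iff.1 this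
      · have hz' : t • (x • m₁ + y • m₂) ≠ 0 := smul_ne_zero ht hz
        rcases mul_nonneg_iff.1 hc with ⟨h1, h2⟩ | ⟨h1, h2⟩
        · have e : y • u + (t * x - s * y) • m₁ = t • (x • m₁ + y • m₂) := by
            rw [← hsu]; module
          have := hP₁ y (t*x - s*y) h1 h2 (by rw [e]; exact hz')
          rw [e] at this
          exact (smul_mem_U_iff ht).1 this
        · have e : (-y) • u + (-(t * x - s * y)) • m₁ = -(t • (x • m₁ + y • m₂)) := by
            rw [← hsu]; module
          have := hP₁ (-y) (-(t*x - s*y)) (by linarith) (by linarith)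
            (by rw [e]; exact neg_ne_zero.2 hz')
          rw [e] at this
          exact (smul_mem_U_iff ht).1 (neg_mem_U_iff.1 this)
      · have hz' : s • (x • m₁ + y • m₂) ≠ 0 := smul_ne_zero hs hz
        rcases mul_nonneg_iff.1 hc with ⟨h1, h2⟩ | ⟨h1, h2⟩
        · have e : x • u + (s * y - t * x) • m₂ = s • (x • m₁ + y • m₂) := by
            rw [← hsu]; module
          have := hP₂ x (s*y - t*x) h1 h2 (by rw [e]; exact hz')
          rw [e] at this
          exact (smul_mem_U_iff hs).1 this
        · have e : (-x) • u + (-(s * y - t * x)) • m₂ = -(s • (x • m₁ + y • m₂)) := by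
            rw [← hsu]; module
          have := hP₂ (-x) (-(s*y - t*x)) (by linarith) (by linarith)
            (by rw [e]; exact neg_ne_zero.2 hz')
          rw [e] at this
          exact (smul_mem_U_iff hs).1 (neg_mem_U_iff.1 this)
    exact hnA (fun a b ha hb hne => claim a b hne)

lemma coplanar_add {C : Set (ℙ ℝ V)} (hconv : IsProjConvex C) {u m₁ m₂ : V} (hu : u ≠ 0)
    (huC : u ∈ U C)
    (hm₁p : ∀ c : ℝ, m₁ ≠ c • u) (hm₂p : ∀ c : ℝ, m₂ ≠ c • u) (h12 : ∀ c : ℝ, m₂ ≠ c • m₁)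
    (hspan : u ∈ Submodule.span ℝ {m₁, m₂})
    (hP₁ : P C u m₁) (hP₂ : P C u m₂) :
    (∃ t : ℝ, 0 < t ∧ m₁ + m₂ = t • u) ∨
      ((∀ c : ℝ, m₁ + m₂ ≠ c • u) ∧ P C u (m₁ + m₂)) := by
  obtain ⟨s, t, hsu⟩ := Submodule.mem_span_pair.1 hspan
  have hm₁0 : m₁ ≠ 0 := fun h => hm₁p 0 (by rw [h, zero_smul])
  have hm₂0 : m₂ ≠ 0 := fun h => hm₂p 0 (by rw [h, zero_smul])
  have hs : s ≠ 0 := by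
    intro hs0
    rw [hs0, zero_smul, zero_add] at hsu
    have ht0 : t ≠ 0 := by rintro rfl; rw [zero_smul] at hsu; exact hu hsu.symm
    exact hm₂p t⁻¹ (by rw [← hsu, smul_smul, inv_mul_cancel₀ ht0, one_smul])
  have ht : t ≠ 0 := by
    intro ht0
    rw [ht0, zero_smul, add_zero] at hsu
    have hs0 : s ≠ 0 := by rintro rfl; rw [zero_smul] at hsu; exact hu hsu.symm
    exact hm₁p s⁻¹ (by rw [← hsu, smul_smul, inv_mul_cancel₀ hs0, one_smul])
  have hm₁U := hP₁.right_mem hm₁0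
  have hm₂U := hP₂.right_mem hm₂0
  have hPm : P C m₁ m₂ :=
    coplanar_flip hconv hu h12 hm₁0 hm₂0 hm₁U hm₂U hs ht hsu hP₁ hP₂
  have hnotneg : ¬(s < 0 ∧ t < 0) := by
    rintro ⟨hs1, ht1⟩
    have hxor := xor_P hconv hu hm₁0 ((mem_U hu).1 huC) ((mem_U hm₁0).1 hm₁U)
      (mk_ne_mk hu hm₁0 hm₁p)
    have hnP : ¬ P C u (-m₁) := by
      rcases hxor with ⟨_, hn⟩ | ⟨_, hn⟩
      · exact hn
      · exact absurd hP₁ hn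
    apply hnP
    intro a b ha hb hne
    have e : a • u + b • (-m₁) = -((b - a*s) • m₁ + (-(a*t)) • m₂) := by rw [← hsu]; module
    have hne' : (b - a*s) • m₁ + (-(a*t)) • m₂ ≠ 0 := by
      intro h0; apply hne; rw [e, h0, neg_zero]
    have := hPm (b - a*s) (-(a*t)) (by nlinarith) (by nlinarith) hne'
    rw [e]
    exact neg_mem_U_iff.2 this
  rcases em (∃ c : ℝ, m₁ + m₂ = c • u) with ⟨c, hc⟩ | hvu
  · have hc0 : c ≠ 0 := by
      rintro rfl
      rw [zero_smul] at hc
      have : m₂ = -m₁ := by linear_combination (norm := module) hc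
      exact h12 (-1) (by rw [neg_one_smul]; exact this)
    have hcs : c * s = 1 ∧ c * t = 1 := by
      have e : (c*s) • m₁ + (c*t) • m₂ = (1:ℝ) • m₁ + (1:ℝ) • m₂ := by
        linear_combination (norm := module) c • hsu - hc
      exact coords_eq hm₁0 h12 e
    rcases lt_or_gt_of_ne hc0 with hneg | hpos
    · exact absurd ⟨by nlinarith [hcs.1], by nlinarith [hcs.2]⟩ hnotneg
    · exact Or.inl ⟨c, hpos, hc⟩
  · push_neg at hvu
    refine Or.inr ⟨hvu, ?_⟩
    intro γ δ hγ hδ hne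
    rcases lt_or_gt_of_ne hs with hs1 | hs1 <;> rcases lt_or_gt_of_ne ht with ht1 | ht1
    · exact absurd ⟨hs1, ht1⟩ hnotneg
    · have e : (γ*t + δ) • u + (δ*(t - s)) • m₁ = t • (γ • u + δ • (m₁ + m₂)) := by
        rw [← hsu]; module
      have hne' : t • (γ • u + δ • (m₁ + m₂)) ≠ 0 := smul_ne_zero ht hne
      have := hP₁ (γ*t + δ) (δ*(t-s)) (by nlinarith) (by nlinarith) (by rw [e]; exact hne')
      rw [e] at this
      exact (smul_mem_U_iff ht).1 this
    · have e : (γ*s + δ) • u + (δ*(s - t)) • m₂ = s • (γ • u + δ • (m₁ + m₂)) := by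
        rw [← hsu]; module
      have hne' : s • (γ • u + δ • (m₁ + m₂)) ≠ 0 := smul_ne_zero hs hne
      have := hP₂ (γ*s + δ) (δ*(s-t)) (by nlinarith) (by nlinarith) (by rw [e]; exact hne')
      rw [e] at this
      exact (smul_mem_U_iff hs).1 this
    · have e : γ • u + δ • (m₁ + m₂) = (γ*s + δ) • m₁ + (γ*t + δ) • m₂ := by
        rw [← hsu]; module
      have := hPm (γ*s + δ) (γ*t + δ) (by nlinarith) (by nlinarith) (by rw [← e]; exact hne)
      rwa [e]

lemma indep_case {C : Set (ℙ ℝ V)} (hC : IsOpen C) (hconv : IsProjConvex C) {u m₁ m₂ : V}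
    (hu : u ≠ 0) (huC : u ∈ U C)
    (hm₁0 : m₁ ≠ 0) (hm₂0 : m₂ ≠ 0)
    (hm₁p : ∀ c : ℝ, m₁ ≠ c • u) (hm₂p : ∀ c : ℝ, m₂ ≠ c • u) (h12 : ∀ c : ℝ, m₂ ≠ c • m₁)
    (hspan : u ∉ Submodule.span ℝ {m₁, m₂})
    (hP₁ : P C u m₁) (hP₂ : P C u m₂) : P C u (m₁ + m₂) := by
  have fact : ∀ x y : ℝ, ¬(x = 0 ∧ y = 0) →
      x • m₁ + y • m₂ ≠ 0 ∧ ∀ c : ℝ, x • m₁ + y • m₂ ≠ c • u := by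
    intro x y hxy
    have hz : x • m₁ + y • m₂ ≠ 0 := by
      intro h0
      rcases eq_or_ne y 0 with rfl | hy0
      · rw [zero_smul, add_zero] at h0
        rcases smul_eq_zero.1 h0 with h1 | h1
        · exact hxy ⟨h1, rfl⟩
        · exact hm₁0 h1
      · apply h12 (y⁻¹ * (-x))
        have h1 : y • m₂ = (-x) • m₁ := by linear_combination (norm := module) h0
        calc m₂ = y⁻¹ • (y • m₂) := by rw [smul_smul, inv_mul_cancel₀ hy0, one_smul]
        _ = y⁻¹ • ((-x) • m₁) := by rw [h1]
        _ = (y⁻¹ * (-x)) • m₁ := by rw [smul_smul]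
    refine ⟨hz, ?_⟩
    intro c hc
    have hc0 : c ≠ 0 := by rintro rfl; rw [zero_smul] at hc; exact hz hc
    apply hspan
    rw [Submodule.mem_span_pair]
    refine ⟨c⁻¹ * x, c⁻¹ * y, ?_⟩
    have : c⁻¹ • (x • m₁ + y • m₂) = c⁻¹ • (c • u) := by rw [hc]
    rw [smul_smul, inv_mul_cancel₀ hc0, one_smul] at this
    calc (c⁻¹ * x) • m₁ + (c⁻¹ * y) • m₂ = c⁻¹ • (x • m₁ + y • m₂) := by module
    _ = u := this
  have hm₁U := hP₁.right_mem hm₁0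
  have hm₂U := hP₂.right_mem hm₂0
  have hPm : P C m₁ m₂ := by
    have hxor := xor_P hconv hm₁0 hm₂0 ((mem_U hm₁0).1 hm₁U) ((mem_U hm₂0).1 hm₂U)
      (mk_ne_mk hm₁0 hm₂0 h12)
    rcases hxor with ⟨h, _⟩ | ⟨hPn, _⟩
    · exact h
    · exfalso
      have hcont : Continuous (fun τ : ℝ => (1 - τ) • m₁ + (-τ) • m₂) := by fun_prop
      have hboth : ∀ τ : ℝ, ¬((1 - τ) = 0 ∧ -τ = 0) := by
        rintro τ ⟨h1, h2⟩
        have hτ : τ = 0 := neg_eq_zero.1 h2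
        rw [hτ] at h1; norm_num at h1
      have hprop : ∀ τ ∈ Set.Icc (0:ℝ) 1, ∀ c : ℝ,
          (1 - τ) • m₁ + (-τ) • m₂ ≠ c • u := fun τ _ => (fact _ _ (hboth τ)).2
      have hmem : ∀ τ ∈ Set.Icc (0:ℝ) 1, (1 - τ) • m₁ + (-τ) • m₂ ∈ U C := by
        intro τ hτ
        have e : (1 - τ) • m₁ + τ • (-m₂) = (1 - τ) • m₁ + (-τ) • m₂ := by module
        have := hPn (1 - τ) τ (by linarith [hτ.2]) hτ.1 (by rw [e]; exact (fact _ _ (hboth τ)).1)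
        rwa [e] at this
      have h0 : P C u ((1 - (0:ℝ)) • m₁ + (-(0:ℝ)) • m₂) := by
        have e : (1 - (0:ℝ)) • m₁ + (-(0:ℝ)) • m₂ = m₁ := by module
        rwa [e]
      have hall := connect hC hconv hu huC _ hcont hprop hmem h0
      have h1 := hall 1 ⟨zero_le_one, le_rfl⟩
      have e1 : (1 - (1:ℝ)) • m₁ + (-(1:ℝ)) • m₂ = -m₂ := by module
      rw [e1] at h1
      have hxor2 := xor_P hconv hu hm₂0 ((mem_U hu).1 huC) ((mem_U hm₂0).1 hm₂U)
        (mk_ne_mk hu hm₂0 hm₂p)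
      rcases hxor2 with ⟨_, hn⟩ | ⟨_, hn⟩
      · exact hn h1
      · exact hn hP₂
  have hboth : ∀ τ : ℝ, τ ∈ Set.Icc (0:ℝ) 1 → ¬((1 - τ) = 0 ∧ τ = 0) := by
    rintro τ _ ⟨h1, h2⟩; rw [h2] at h1; norm_num at h1
  have hcont : Continuous (fun τ : ℝ => (1 - τ) • m₁ + τ • m₂) := by fun_prop
  have hprop : ∀ τ ∈ Set.Icc (0:ℝ) 1, ∀ c : ℝ, (1 - τ) • m₁ + τ • m₂ ≠ c • u :=
    fun τ hτ => (fact _ _ (hboth τ hτ)).2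
  have hmem : ∀ τ ∈ Set.Icc (0:ℝ) 1, (1 - τ) • m₁ + τ • m₂ ∈ U C := fun τ hτ =>
    hPm (1 - τ) τ (by linarith [hτ.2]) hτ.1 (fact _ _ (hboth τ hτ)).1
  have h0 : P C u ((1 - (0:ℝ)) • m₁ + (0:ℝ) • m₂) := by
    have e : (1 - (0:ℝ)) • m₁ + (0:ℝ) • m₂ = m₁ := by module
    rwa [e]
  have hall := connect hC hconv hu huC _ hcont hprop hmem h0
  have hhalf := hall (1/2) ⟨by norm_num, by norm_num⟩
  have e : (1 - (1/2:ℝ)) • m₁ + (1/2:ℝ) • m₂ = (1/2 : ℝ) • (m₁ + m₂) := by module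
  rw [e] at hhalf
  exact (P.smul_right_iff (by norm_num)).1 hhalf

/-- The coherent cone over `C` based at `u`. -/
def Kcone (C : Set (ℙ ℝ V)) (u : V) : Set V :=
  {m | (∃ t : ℝ, 0 < t ∧ m = t • u) ∨ ((∀ c : ℝ, m ≠ c • u) ∧ P C u m)}

lemma Kcone.subset_U {C : Set (ℙ ℝ V)} {u : V} (huC : u ∈ U C) : Kcone C u ⊆ U C := by
  rintro m (⟨t, ht, rfl⟩ | ⟨hm, hP⟩)
  · exact smul_mem_U ht.ne' huC
  · have hm0 : m ≠ 0 := fun h => hm 0 (by rw [h, zero_smul])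
    have := hP 0 1 le_rfl zero_le_one (by simpa using hm0)
    simpa using this

lemma Kcone.smul {C : Set (ℙ ℝ V)} {u m : V} {t : ℝ} (ht : 0 < t) (h : m ∈ Kcone C u) :
    t • m ∈ Kcone C u := by
  rcases h with ⟨t', ht', rfl⟩ | ⟨hm, hP⟩
  · exact Or.inl ⟨t * t', mul_pos ht ht', by rw [smul_smul]⟩
  · refine Or.inr ⟨?_, hP.smul_right ht⟩
    intro c hc
    apply hm (t⁻¹ * c)
    calc m = t⁻¹ • (t • m) := by rw [smul_smul, inv_mul_cancel₀ ht.ne', one_smul]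
    _ = t⁻¹ • (c • u) := by rw [hc]
    _ = (t⁻¹ * c) • u := by rw [smul_smul]

lemma Kcone.add {C : Set (ℙ ℝ V)} (hC : IsOpen C) (hconv : IsProjConvex C) {u : V}
    (hu : u ≠ 0) (huC : u ∈ U C) {m₁ m₂ : V}
    (h₁ : m₁ ∈ Kcone C u) (h₂ : m₂ ∈ Kcone C u) : m₁ + m₂ ∈ Kcone C u := by
  have mixed : ∀ t : ℝ, 0 < t → ∀ m : V, (∀ c : ℝ, m ≠ c • u) → P C u m →
      (t • u + m) ∈ Kcone C u := by
    intro t ht m hm hP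
    refine Or.inr ⟨?_, ?_⟩
    · intro c hc
      apply hm (c - t)
      linear_combination (norm := module) hc
    · intro a b ha hb hne
      have e : a • u + b • (t • u + m) = (a + b*t) • u + b • m := by module
      rw [e] at hne ⊢
      exact hP (a + b*t) b (by nlinarith) hb hne
  rcases h₁ with ⟨t₁, ht₁, rfl⟩ | ⟨hm₁, hP₁⟩
  · rcases h₂ with ⟨t₂, ht₂, rfl⟩ | ⟨hm₂, hP₂⟩
    · exact Or.inl ⟨t₁ + t₂, by linarith, by module⟩
    · exact mixed t₁ ht₁ m₂ hm₂ hP₂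
  · rcases h₂ with ⟨t₂, ht₂, rfl⟩ | ⟨hm₂, hP₂⟩
    · rw [add_comm]; exact mixed t₂ ht₂ m₁ hm₁ hP₁
    · have hm₁0 : m₁ ≠ 0 := fun h => hm₁ 0 (by rw [h, zero_smul])
      have hm₂0 : m₂ ≠ 0 := fun h => hm₂ 0 (by rw [h, zero_smul])
      rcases em (∃ c : ℝ, m₂ = c • m₁) with ⟨c, hc⟩ | h12
      · have hc0 : c ≠ 0 := by rintro rfl; rw [zero_smul] at hc; exact hm₂0 hc
        rcases lt_or_gt_of_ne hc0 with hneg | hpos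
        · exfalso
          have hP₂' : P C u (-m₁) := by
            have e : m₂ = (-c) • (-m₁) := by rw [hc]; module
            rw [e] at hP₂
            exact (P.smul_right_iff (by linarith)).1 hP₂
          have hxor := xor_P hconv hu hm₁0 ((mem_U hu).1 huC)
            ((mem_U hm₁0).1 (hP₁.right_mem hm₁0)) (mk_ne_mk hu hm₁0 hm₁)
          rcases hxor with ⟨_, hn⟩ | ⟨_, hn⟩
          · exact hn hP₂'
          · exact hn hP₁
        · have he : m₁ + m₂ = (1 + c) • m₁ := by rw [hc]; module
          rw [he]
          exact Kcone.smul (by linarith) (Or.inr ⟨hm₁, hP₁⟩)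
      · push_neg at h12
        rcases em (u ∈ Submodule.span ℝ {m₁, m₂}) with hspan | hspan
        · exact coplanar_add hconv hu huC hm₁ hm₂ h12 hspan hP₁ hP₂
        · refine Or.inr ⟨?_, indep_case hC hconv hu huC hm₁0 hm₂0 hm₁ hm₂ h12 hspan hP₁ hP₂⟩
          intro c hc
          have hsum0 : m₁ + m₂ ≠ 0 := by
            intro h
            exact h12 (-1) (by rw [neg_one_smul]; linear_combination (norm := module) h)
          have hc0 : c ≠ 0 := by rintro rfl; rw [zero_smul] at hc; exact hsum0 hc
          apply hspan
          rw [Submodule.mem_span_pair]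
          refine ⟨c⁻¹, c⁻¹, ?_⟩
          calc c⁻¹ • m₁ + c⁻¹ • m₂ = c⁻¹ • (m₁ + m₂) := by module
          _ = c⁻¹ • (c • u) := by rw [hc]
          _ = u := by rw [smul_smul, inv_mul_cancel₀ hc0, one_smul]

lemma Kcone.convex {C : Set (ℙ ℝ V)} (hC : IsOpen C) (hconv : IsProjConvex C) {u : V}
    (hu : u ≠ 0) (huC : u ∈ U C) : Convex ℝ (Kcone C u) := by
  intro x hx y hy a b ha hb hab
  rcases eq_or_lt_of_le ha with h | h
  · have hb1 : b = 1 := by linarith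
    rw [← h, hb1, zero_smul, one_smul, zero_add]
    exact hy
  · rcases eq_or_lt_of_le hb with h2 | h2
    · have ha1 : a = 1 := by linarith
      rw [← h2, ha1, zero_smul, one_smul, add_zero]
      exact hx
    · exact Kcone.add hC hconv hu huC (Kcone.smul h hx) (Kcone.smul h2 hy)

lemma Kcone.isOpen {C : Set (ℙ ℝ V)} (hC : IsOpen C) {u : V} (hu : u ≠ 0) (huC : u ∈ U C) :
    IsOpen (Kcone C u) := by
  obtain ⟨g, _, hgu⟩ := exists_dual_vector ℝ u (norm_ne_zero_iff.mpr hu)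
  have hgu0 : (0:ℝ) < g u := by
    rw [hgu]
    simpa using norm_pos_iff.2 hu
  rw [isOpen_iff_forall_mem_open]
  intro m₀ hm₀
  rcases hm₀ with ⟨t₀, ht₀, rfl⟩ | ⟨hm₀p, hP₀⟩
  · refine ⟨{m | Q C u m} ∩ g ⁻¹' (Set.Ioi 0), ?_, 
      (isOpen_setOf_Q hC u).inter (g.continuous.isOpen_preimage _ isOpen_Ioi), ?_, ?_⟩
    · rintro m ⟨hQ, hg⟩
      rcases em (∃ c : ℝ, m = c • u) with ⟨c, rfl⟩ | hp
      · left
        refine ⟨c, ?_, rfl⟩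
        have e : g (c • u) = c * g u := by rw [map_smul, smul_eq_mul]
        have : (0:ℝ) < c * g u := by rw [← e]; exact hg
        nlinarith
      · push_neg at hp
        exact Or.inr ⟨hp, Q.toP hQ⟩
    · intro s hs
      have e : (1 - s) • u + s • (t₀ • u) = (1 - s + s * t₀) • u := by module
      have hpos : 0 < 1 - s + s * t₀ := by
        rcases lt_or_ge s 1 with h | h
        · have := mul_nonneg hs.1 ht₀.le
          linarith
        · have hs1 : s = 1 := le_antisymm hs.2 h
          rw [hs1]; linarith
      rw [e]
      exact smul_mem_U hpos.ne' huC
    · show (0:ℝ) < g (t₀ • u)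
      have e : g (t₀ • u) = t₀ * g u := by rw [map_smul, smul_eq_mul]
      rw [e]
      positivity
  · refine ⟨{m | Q C u m} ∩ (↑(Submodule.span ℝ {u}) : Set V)ᶜ, ?_, ?_, ?_, ?_⟩
    · rintro m ⟨hQ, hsp⟩
      refine Or.inr ⟨fun c hc => hsp (Submodule.mem_span_singleton.2 ⟨c, hc.symm⟩), Q.toP hQ⟩
    · exact (isOpen_setOf_Q hC u).inter
        (Submodule.closed_of_finiteDimensional _).isOpen_compl
    · exact hP₀.toQ (fun s _ => combo_ne hu hm₀p s)
    · intro hsp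
      obtain ⟨c, hc⟩ := Submodule.mem_span_singleton.1 hsp
      exact hm₀p c hc.symm

lemma Kcone.exists_mk {C : Set (ℙ ℝ V)} (hconv : IsProjConvex C) {p₀ : ℙ ℝ V} (hp₀ : p₀ ∈ C)
    {y : ℙ ℝ V} (hy : y ∈ C) :
    ∃ (m : V) (h0 : m ≠ 0), m ∈ Kcone C p₀.rep ∧ Projectivization.mk ℝ m h0 = y := by
  set u := p₀.rep with hu_def
  have hu : u ≠ 0 := p₀.rep_nonzero
  by_cases hyp : y = p₀
  · exact ⟨u, hu, Or.inl ⟨1, one_pos, (one_smul ℝ u).symm⟩, by rw [mk_rep]; exact hyp.symm⟩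
  · set w := y.rep with hw_def
    have hw : w ≠ 0 := y.rep_nonzero
    have hwp : ∀ c : ℝ, w ≠ c • u := by
      intro c hc
      have hc0 : c ≠ 0 := by rintro rfl; rw [zero_smul] at hc; exact hw hc
      apply hyp
      rw [← mk_rep y, ← mk_rep p₀]
      rw [mk_eq_mk_iff']
      exact ⟨c, hc.symm⟩
    have hxor := hconv p₀ hp₀ y hy (fun h => hyp h.symm)
    rw [projSeg_subset_iff, projSegN_subset_iff] at hxor
    rcases hxor with ⟨h, _⟩ | ⟨h, _⟩
    · exact ⟨w, hw, Or.inr ⟨hwp, h⟩, mk_rep y⟩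
    · refine ⟨-w, neg_ne_zero.2 hw, Or.inr ⟨?_, h⟩, ?_⟩
      · intro c hc
        apply hwp (-c)
        rw [← neg_neg w, hc]; module
      · rw [show Projectivization.mk ℝ (-w) (neg_ne_zero.2 hw) = Projectivization.mk ℝ w hw from
          by rw [mk_eq_mk_iff']; exact ⟨-1, by module⟩]
        exact mk_rep y

lemma separation [FiniteDimensional ℝ V] (h2 : 2 ≤ Module.finrank ℝ V)
    {C : Set (ℙ ℝ V)} (hC : IsOpen C) (hconv : IsProjConvex C) (x : ℙ ℝ V) (hx : x ∉ C) :
    ∃ φ : Module.Dual ℝ V, φ ≠ 0 ∧ φ x.rep = 0 ∧ ∀ y ∈ C, φ y.rep ≠ 0 := by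
  rcases C.eq_empty_or_nonempty with rfl | ⟨p₀, hp₀⟩
  · have hlt : Submodule.span ℝ {x.rep} < ⊤ := by
      rw [lt_top_iff_ne_top]
      intro htop
      have h1 := finrank_span_singleton (K := ℝ) x.rep_nonzero
      rw [htop] at h1
      rw [finrank_top ℝ V] at h1
      omega
    obtain ⟨f, hf0, hfmap⟩ := Submodule.exists_dual_map_eq_bot_of_lt_top hlt inferInstance
    refine ⟨f, hf0, ?_, fun y hy => absurd hy (Set.notMem_empty y)⟩
    have : f x.rep ∈ Submodule.map f (Submodule.span ℝ {x.rep}) :=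
      Submodule.mem_map_of_mem (Submodule.mem_span_singleton_self _)
    rw [hfmap] at this
    exact this
  · set u := p₀.rep with hu_def
    have hu : u ≠ 0 := p₀.rep_nonzero
    have huC : u ∈ U C := ⟨hu, by rw [mk_rep]; exact hp₀⟩
    have hKopen := Kcone.isOpen hC hu huC
    have hKconv := Kcone.convex hC hconv hu huC
    have hdisj : Disjoint (Kcone C u) (↑(Submodule.span ℝ {x.rep}) : Set V) := by
      rw [Set.disjoint_left]
      intro m hm hmem
      obtain ⟨c, hc⟩ := Submodule.mem_span_singleton.1 hmem
      have hmU := Kcone.subset_U huC hm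
      have hm0 := ne_zero_of_mem_U hmU
      apply hx
      have hmC : Projectivization.mk ℝ m hm0 ∈ C := (mem_U hm0).1 hmU
      have hc0 : c ≠ 0 := by rintro rfl; rw [zero_smul] at hc; exact hm0 hc.symm
      have : Projectivization.mk ℝ m hm0 = x := by
        rw [← mk_rep x, mk_eq_mk_iff']
        exact ⟨c, hc⟩
      rwa [this] at hmC
    obtain ⟨f, r, hfK, hfT⟩ := geometric_hahn_banach_open hKconv hKopen
      (Submodule.span ℝ {x.rep}).convex hdisj
    have hr0 : r ≤ 0 := by simpa using hfT 0 (Submodule.zero_mem _)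
    have hfx : f x.rep = 0 := by
      by_contra hne
      have h1 := hfT (((r - 1) / f x.rep) • x.rep)
        (Submodule.smul_mem _ _ (Submodule.mem_span_singleton_self _))
      rw [map_smul, smul_eq_mul, div_mul_cancel₀ _ hne] at h1
      linarith
    have huK : u ∈ Kcone C u := Or.inl ⟨1, one_pos, (one_smul ℝ u).symm⟩
    have hfu : f u < 0 := lt_of_lt_of_le (hfK u huK) hr0
    refine ⟨(f : V →ₗ[ℝ] ℝ), ?_, hfx, ?_⟩
    · intro h0
      have h1 : f u = 0 := by
        have := LinearMap.congr_fun h0 u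
        simpa using this
      linarith
    · intro y hy
      obtain ⟨m, hm0, hmK, hmk⟩ := Kcone.exists_mk hconv hp₀ hy
      obtain ⟨a, ha⟩ := exists_smul_eq_mk_rep ℝ m hm0
      rw [hmk] at ha
      have hfm : f m < 0 := lt_of_lt_of_le (hfK m hmK) hr0
      intro h0
      have h0' : f y.rep = 0 := h0
      rw [← ha, Units.smul_def, map_smul, smul_eq_mul] at h0'
      rcases mul_eq_zero.1 h0' with h | h
      · exact Units.ne_zero a h
      · linarith

lemma mem_hyp (φ : Module.Dual ℝ V) {v : V} (hv : v ≠ 0) :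
    Projectivization.mk ℝ v hv ∈ {x : ℙ ℝ V | φ x.rep ≠ 0} ↔ φ v ≠ 0 := by
  obtain ⟨a, ha⟩ := exists_smul_eq_mk_rep ℝ v hv
  simp only [Set.mem_setOf_eq]
  rw [← ha, Units.smul_def, map_smul, smul_eq_mul]
  simp [mul_eq_zero, Units.ne_zero a]

lemma mem_U_hyp (φ : Module.Dual ℝ V) {v : V} (hv : v ≠ 0) :
    v ∈ U {x : ℙ ℝ V | φ x.rep ≠ 0} ↔ φ v ≠ 0 :=
  (mem_U hv).trans (mem_hyp φ hv)

lemma isOpen_hyp [FiniteDimensional ℝ V] (φ : Module.Dual ℝ V) :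
    IsOpen {x : ℙ ℝ V | φ x.rep ≠ 0} := by
  have hqm := isQuotientMap_quotient_mk' (X := {v : V // v ≠ 0})
    (s := projectivizationSetoid ℝ V)
  refine hqm.isOpen_preimage.mp ?_
  have he : (@Quotient.mk' {v : V // v ≠ 0} (projectivizationSetoid ℝ V)) ⁻¹'
      {x : ℙ ℝ V | φ x.rep ≠ 0} = {v : {v : V // v ≠ 0} | φ v.1 ≠ 0} := by
    ext v
    exact mem_hyp φ v.2
  erw [he]
  have hc : Continuous fun v : {v : V // v ≠ 0} => φ v.1 :=
    φ.continuous_of_finiteDimensional.comp continuous_subtype_val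
  exact hc.isOpen_preimage _ isOpen_compl_singleton

lemma isProjConvex_hyp (φ : Module.Dual ℝ V) :
    IsProjConvex {x : ℙ ℝ V | φ x.rep ≠ 0} := by
  intro p hp q hq hne
  set Cφ := {x : ℙ ℝ V | φ x.rep ≠ 0} with hCφ
  have hu : p.rep ≠ 0 := p.rep_nonzero
  have hq0 : q.rep ≠ 0 := q.rep_nonzero
  have hup : φ p.rep ≠ 0 := hp
  have huq : φ q.rep ≠ 0 := hq
  rw [projSeg_subset_iff, projSegN_subset_iff]
  have hwp : ∀ c : ℝ, q.rep ≠ c • p.rep := by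
    intro c hc
    have hc0 : c ≠ 0 := by rintro rfl; rw [zero_smul] at hc; exact hq0 hc
    apply hne
    rw [← mk_rep p, ← mk_rep q, mk_eq_mk_iff']
    refine ⟨c⁻¹, ?_⟩
    rw [hc, smul_smul, inv_mul_cancel₀ hc0, one_smul]
  have key : ∀ w : V, w ≠ 0 → (∀ c : ℝ, w ≠ c • p.rep) → 0 < φ p.rep * φ w →
      P Cφ p.rep w ∧ ¬ P Cφ p.rep (-w) := by
    intro w hw0 hwp hpos
    constructor
    · intro a b ha hb hne'
      rw [mem_U_hyp φ hne']
      rw [map_add, map_smul, map_smul, smul_eq_mul, smul_eq_mul]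
      intro h0
      rcases mul_pos_iff.1 hpos with ⟨h1, h2⟩ | ⟨h1, h2⟩
      · have ha0 : a = 0 := by nlinarith
        have hb0 : b = 0 := by nlinarith
        exact hne' (by rw [ha0, hb0]; simp)
      · have ha0 : a = 0 := by nlinarith
        have hb0 : b = 0 := by nlinarith
        exact hne' (by rw [ha0, hb0]; simp)
    · intro hP
      rcases mul_pos_iff.1 hpos with ⟨h1, h2⟩ | ⟨h1, h2⟩
      · have hne' : (φ w) • p.rep + (φ p.rep) • (-w) ≠ 0 := by
          intro h0
          apply hwp (φ w / φ p.rep)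
          have h3 : (φ p.rep) • w = (φ w) • p.rep := by
            linear_combination (norm := module) -h0
          calc w = (φ p.rep)⁻¹ • ((φ p.rep) • w) := by
                rw [smul_smul, inv_mul_cancel₀ h1.ne', one_smul]
          _ = (φ p.rep)⁻¹ • ((φ w) • p.rep) := by rw [h3]
          _ = (φ w / φ p.rep) • p.rep := by rw [smul_smul]; congr 1; ring
        have hm := hP (φ w) (φ p.rep) h2.le h1.le hne'
        rw [mem_U_hyp φ hne'] at hm
        apply hm
        rw [map_add, map_smul, map_smul, map_neg, smul_eq_mul, smul_eq_mul]; ring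
      · have hne' : (-(φ w)) • p.rep + (-(φ p.rep)) • (-w) ≠ 0 := by
          intro h0
          apply hwp (φ w / φ p.rep)
          have h3 : (φ p.rep) • w = (φ w) • p.rep := by linear_combination (norm := module) h0
          calc w = (φ p.rep)⁻¹ • ((φ p.rep) • w) := by
                rw [smul_smul, inv_mul_cancel₀ h1.ne, one_smul]
          _ = (φ p.rep)⁻¹ • ((φ w) • p.rep) := by rw [h3]
          _ = (φ w / φ p.rep) • p.rep := by rw [smul_smul]; congr 1; ring
        have hm := hP (-(φ w)) (-(φ p.rep)) (by linarith) (by linarith) hne'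
        rw [mem_U_hyp φ hne'] at hm
        apply hm
        rw [map_add, map_smul, map_smul, map_neg, smul_eq_mul, smul_eq_mul]; ring
  rcases lt_or_gt_of_ne (mul_ne_zero hup huq) with hneg | hpos
  · have hwp' : ∀ c : ℝ, -q.rep ≠ c • p.rep := by
      intro c hc
      apply hwp (-c)
      rw [← neg_neg q.rep, hc]; module
    obtain ⟨h1, h2⟩ := key (-q.rep) (neg_ne_zero.2 hq0) hwp'
      (by rw [map_neg]; nlinarith)
    rw [neg_neg] at h2
    exact Or.inr ⟨h1, h2⟩
  · obtain ⟨h1, h2⟩ := key q.rep hq0 hwp hpos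
    exact Or.inl ⟨h1, h2⟩

lemma exists_ne_points [FiniteDimensional ℝ V] (h2 : 2 ≤ Module.finrank ℝ V) :
    ∃ p q : ℙ ℝ V, p ≠ q := by
  set b := Module.finBasis ℝ V with hb
  set i0 : Fin (Module.finrank ℝ V) := ⟨0, by omega⟩ with hi0
  set i1 : Fin (Module.finrank ℝ V) := ⟨1, by omega⟩ with hi1
  refine ⟨Projectivization.mk ℝ (b i0) (b.ne_zero i0),
    Projectivization.mk ℝ (b i1) (b.ne_zero i1), ?_⟩
  intro h
  rw [mk_eq_mk_iff'] at h
  obtain ⟨a, ha⟩ := h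
  have hne : i1 ≠ i0 := by simp [hi0, hi1, Fin.ext_iff]
  have := congrArg (fun z => b.repr z i0) ha
  simp [map_smul, Module.Basis.repr_self, Finsupp.single_apply, hne] at this

lemma exists_not_mem [FiniteDimensional ℝ V] (h2 : 2 ≤ Module.finrank ℝ V)
    {C : Set (ℙ ℝ V)} (hconv : IsProjConvex C) : ∃ x, x ∉ C := by
  by_contra h
  push_neg at h
  obtain ⟨p, q, hpq⟩ := exists_ne_points h2
  rcases hconv p (h p) q (h q) hpq with ⟨_, hn⟩ | ⟨_, hn⟩
  · exact hn (fun z _ => h z)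
  · exact hn (fun z _ => h z)

end PS

/-- `S` is a saturated multi-convex set iff some projective hyperplane is disjoint from `S` and
`S` is the intersection of the complements of all projective hyperplanes disjoint from `S`
(i.e. of a nonempty family of irreducible convex sets containing `S`). -/
theorem isSatMultiConvex_iff_inter_irreducibles
    {V : Type*} [NormedAddCommGroup V] [NormedSpace ℝ V] [FiniteDimensional ℝ V]
    (h2 : 2 ≤ Module.finrank ℝ V) (S : Set (ℙ ℝ V)) :
    IsSatMultiConvex S ↔
      ((∃ φ : Module.Dual ℝ V, φ ≠ 0 ∧ ∀ y ∈ S, φ y.rep ≠ 0) ∧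
        S = {x : ℙ ℝ V | ∀ φ : Module.Dual ℝ V, φ ≠ 0 →
              (∀ y ∈ S, φ y.rep ≠ 0) → φ x.rep ≠ 0}) := by
  constructor
  · rintro ⟨F, ⟨C₀, hC₀F⟩, hF, rfl⟩
    have hsep : ∀ C ∈ F, ∀ x ∉ C,
        ∃ φ : Module.Dual ℝ V, φ ≠ 0 ∧ φ x.rep = 0 ∧ ∀ y ∈ C, φ y.rep ≠ 0 :=
      fun C hCF x hx => PS.separation h2 (hF C hCF).1 (hF C hCF).2 x hx
    constructor
    · obtain ⟨x₀, hx₀⟩ := PS.exists_not_mem h2 (hF C₀ hC₀F).2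
      obtain ⟨φ, hφ0, _, hφ⟩ := hsep C₀ hC₀F x₀ hx₀
      exact ⟨φ, hφ0, fun y hy => hφ y (Set.mem_sInter.1 hy C₀ hC₀F)⟩
    · ext x
      simp only [Set.mem_setOf_eq]
      constructor
      · intro hx φ hφ0 hdisj
        exact hdisj x hx
      · intro hx
        rw [Set.mem_sInter]
        intro C hCF
        by_contra hxC
        obtain ⟨φ, hφ0, hφx, hφ⟩ := hsep C hCF x hxC
        exact hx φ hφ0 (fun y hy => hφ y (Set.mem_sInter.1 hy C hCF)) hφx
  · rintro ⟨⟨φ₀, hφ₀, hdisj₀⟩, hSeq⟩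
    refine ⟨{T | ∃ φ : Module.Dual ℝ V, φ ≠ 0 ∧ (∀ y ∈ S, φ y.rep ≠ 0) ∧
        T = {x : ℙ ℝ V | φ x.rep ≠ 0}},
      ⟨{x : ℙ ℝ V | φ₀ x.rep ≠ 0}, φ₀, hφ₀, hdisj₀, rfl⟩, ?_, ?_⟩
    · rintro T ⟨φ, hφ0, _, rfl⟩
      exact ⟨PS.isOpen_hyp φ, PS.isProjConvex_hyp φ⟩
    · ext x
      constructor
      · intro hx
        rw [Set.mem_sInter]
        rintro T ⟨φ, hφ0, hd, rfl⟩
        exact hd x hx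
      · intro hx
        rw [hSeq]
        intro φ hφ0 hd
        exact Set.mem_sInter.1 hx {y : ℙ ℝ V | φ y.rep ≠ 0} ⟨φ, hφ0, hd, rfl⟩
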